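/- Let d > 0 and N ≥ d be integers and let c, m be positive integers with c < m. Then both ⌊n/d⌋ = ⌊(c·n + c)/m⌋ and n mod d = ⌊(((c·n + c) mod m)·d)/m⌋ hold for all integers n with 0 ≤ n ≤ N if and only if (1 - 1/(N+1))·(1/d) ≤ c/m < 1/d. -/

import Mathlib

theorem stmt_7 (d N c m : ℕ) (hd : 0 < d) (hN : d ≤ N) (hc : 0 < c) (hcm : c < m) :
    (∀ n : ℕ, n ≤ N →
        n / d = (c * n + c) / m ∧ n % d = (((c * n + c) % m) * d) / m) ↔
      ((1 - 1 / ((N : ℚ) + 1)) * (1 / d) ≤ (c : ℚ) / m ∧ (c : ℚ) / m < 1 / d) := by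
  have hm : 0 < m := hc.trans hcm
  have hdq : (0:ℚ) < d := by exact_mod_cast hd
  have hmq : (0:ℚ) < m := by exact_mod_cast hm
  have key : ((1 - 1 / ((N : ℚ) + 1)) * (1 / d) ≤ (c : ℚ) / m ∧ (c : ℚ) / m < 1 / d)
      ↔ (N * m ≤ c * (N + 1) * d ∧ c * d < m) := by
    have heq : (1 - 1 / ((N : ℚ) + 1)) * (1 / d) = (N:ℚ) / (((N:ℚ)+1) * d) := by
      field_simp
      ring
    rw [heq, div_le_div_iff₀ (by positivity) hmq, div_lt_div_iff₀ hmq hdq]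
    constructor
    · rintro ⟨h1, h2⟩
      constructor
      · have : (N:ℚ) * m ≤ c * (N + 1) * d := by nlinarith
        exact_mod_cast this
      · have : (c:ℚ) * d < m := by nlinarith
        exact_mod_cast this
    · rintro ⟨h1, h2⟩
      have h1' : (N:ℚ) * m ≤ c * (N + 1) * d := by exact_mod_cast h1
      have h2' : (c:ℚ) * d < m := by exact_mod_cast h2
      exact ⟨by nlinarith, by nlinarith⟩
  rw [key]
  constructor
  · intro h
    obtain ⟨hb1, _⟩ := h (d - 1) (by omega)
    have hcd : c * (d - 1) + c = c * d := by
      cases d with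
      | zero => omega
      | succ k => simp [Nat.mul_succ]
    have hlt : (d - 1) / d = 0 := Nat.div_eq_of_lt (by omega)
    have hB : c * d < m := by
      have h0 : (c * (d - 1) + c) / m = 0 := by omega
      have := (Nat.div_eq_zero_iff.mp h0).resolve_left (by omega)
      omega
    refine ⟨?_, hB⟩
    obtain ⟨h1, h2⟩ := h N le_rfl
    set q := N / d with hq
    set r := N % d with hr
    have hqr : d * q + r = N := Nat.div_add_mod N d
    have hN1 : c * N + c = c * (N + 1) := by ring
    have hdiv : c * (N + 1) / m = q := by rw [← hN1, ← h1]
    have hql : q * m ≤ c * (N + 1) := by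
      calc q * m = c * (N + 1) / m * m := by rw [hdiv]
        _ ≤ c * (N + 1) := Nat.div_mul_le_self _ _
    have hmod : c * (N + 1) % m + m * q = c * (N + 1) := by
      have := Nat.mod_add_div (c * (N + 1)) m
      rw [hdiv] at this; exact this
    set s := c * (N + 1) % m with hs
    have hrs : r = s * d / m := by rw [h2, hN1]
    have hrl : r * m ≤ s * d := by
      calc r * m = s * d / m * m := by rw [hrs]
        _ ≤ s * d := Nat.div_mul_le_self _ _
    have hmd : s * d + m * q * d = c * (N + 1) * d := by rw [← hmod]; ring
    have hNm : N * m = d * q * m + r * m := by rw [← hqr]; ring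
    linarith [hmd, hNm, hrl]
  · rintro ⟨hA, hB⟩ n hn
    have hN1 : c * n + c = c * (n + 1) := by ring
    set q := n / d with hq
    set r := n % d with hr
    have hqr : d * q + r = n := Nat.div_add_mod n d
    have hrd : r < d := Nat.mod_lt n hd
    have hN0 : 0 < N := by omega
    have s1 : d * q ≤ n := Nat.le.intro hqr
    have s1' : d * q ≤ N := s1.trans hn
    have hlow : q * m ≤ c * (n + 1) := by
      have s2 : q * (N + 1) * d ≤ (n + 1) * N := by
        have u1 := Nat.mul_le_mul_right N s1
        linarith [u1, s1']
      have s3 : q * m * N ≤ c * (n + 1) * N := by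
        have u2 := Nat.mul_le_mul_left q hA
        have u3 := Nat.mul_le_mul_left c s2
        linarith [u2, u3]
      exact Nat.le_of_mul_le_mul_right s3 hN0
    have hhigh : c * (n + 1) < (q + 1) * m := by
      have s4 : n + 1 ≤ (q + 1) * d := by linarith [hqr, hrd]
      have u4 := Nat.mul_le_mul_left c s4
      have u5 := mul_lt_mul_of_pos_left hB (Nat.succ_pos q)
      linarith [u4, u5]
    have hdiv : c * (n + 1) / m = q := Nat.div_eq_of_lt_le hlow hhigh
    have hmod : c * (n + 1) % m + m * q = c * (n + 1) := by
      have := Nat.mod_add_div (c * (n + 1)) m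
      rw [hdiv] at this; exact this
    set s := c * (n + 1) % m with hs
    refine ⟨by rw [hN1, hdiv], ?_⟩
    rw [hN1]
    have hnm : n * m ≤ c * (n + 1) * d := by
      have t1 : n * (N + 1) ≤ (n + 1) * N := by nlinarith [hn]
      have t2 : n * m * (N + 1) ≤ c * (n + 1) * d * (N + 1) := by
        have u6 := Nat.mul_le_mul_right m t1
        have u7 := Nat.mul_le_mul_left (n + 1) hA
        linarith [u6, u7]
      exact Nat.le_of_mul_le_mul_right t2 (by omega)
    have hmd : s * d + m * q * d = c * (n + 1) * d := by rw [← hmod]; ring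
    have hnm' : (d * q + r) * m ≤ c * (n + 1) * d := by rw [hqr]; exact hnm
    have hlow2 : r * m ≤ s * d := by linarith [hmd, hnm']
    have hhigh2 : s * d < (r + 1) * m := by
      have u8 := mul_lt_mul_of_pos_left hB (show 0 < n + 1 by omega)
      have h3 : c * (n + 1) * d < (n + 1) * m := by linarith [u8]
      have h4 : (n + 1) * m = m * q * d + (r + 1) * m := by rw [← hqr]; ring
      linarith [hmd, h3, h4]
    exact (Nat.div_eq_of_lt_le hlow2 hhigh2).symm
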